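/- Let H : ℝ^{2m} → ℝ be continuously differentiable, J the canonical skew-symmetric matrix [[0, I_m],[-I_m, 0]], h > 0, and let σ : [t_0, t_0+h] → ℝ^{2m} be a polynomial (in each coordinate) with σ(t_0) = y_0 satisfying σ'(t_0+τh) = J Σ_{j=0}^{s-1} P_j(τ) ∫_0^1 P_j(c) ∇H(σ(t_0+ch)) dc for all τ ∈ [0,1], where {P_j} are L^2[0,1]-orthonormal polynomials. Then H(σ(t_0+h)) = H(y_0). -/

import Mathlib

open scoped Matrix

/-- skew matrices have vanishing quadratic form -/
lemma dot_sum {n : Type*} [Fintype n] (v : n → ℝ) {ι : Type*} (t : Finset ι)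
    (w : ι → n → ℝ) : v ⬝ᵥ (∑ j ∈ t, w j) = ∑ j ∈ t, v ⬝ᵥ w j := by
  classical
  simp only [dotProduct, Finset.sum_apply, Finset.mul_sum]
  exact Finset.sum_comm

/-- skew matrices have vanishing quadratic form -/
lemma skew_quad {n : ℕ} (J : Matrix (Fin n) (Fin n) ℝ) (hJT : Jᵀ = -J)
    (v : Fin n → ℝ) : v ⬝ᵥ J.mulVec v = 0 := by
  have h1 : v ⬝ᵥ J.mulVec v = Matrix.vecMul v J ⬝ᵥ v := Matrix.dotProduct_mulVec v J v
  have h2 : Matrix.vecMul v J = Jᵀ.mulVec v := (Matrix.mulVec_transpose J v).symm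
  rw [h2, hJT, Matrix.neg_mulVec] at h1
  have h3 : (-(J.mulVec v)) ⬝ᵥ v = -(J.mulVec v ⬝ᵥ v) := neg_dotProduct _ _
  rw [h3] at h1
  have h4 : v ⬝ᵥ J.mulVec v = J.mulVec v ⬝ᵥ v := dotProduct_comm _ _
  rw [h4] at h1 ⊢
  linarith

/-- The polynomial defined by the truncated Legendre expansion of the Hamiltonian
vector field conserves the Hamiltonian exactly. -/
theorem stmt1 (m s : ℕ) (t0 h : ℝ) (hh : 0 < h)
    (H : (Fin (2*m) → ℝ) → ℝ) (gH : (Fin (2*m) → ℝ) → (Fin (2*m) → ℝ))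
    (hH1 : ContDiff ℝ 1 H)
    (hg : ∀ y v : Fin (2*m) → ℝ,
      HasDerivAt (fun r : ℝ => H (y + r • v)) (gH y ⬝ᵥ v) 0)
    (J : Matrix (Fin (2*m)) (Fin (2*m)) ℝ)
    (hJ : J = (Matrix.fromBlocks (0 : Matrix (Fin m) (Fin m) ℝ) (1 : Matrix (Fin m) (Fin m) ℝ)
        (-(1 : Matrix (Fin m) (Fin m) ℝ)) 0).reindex
        (finSumFinEquiv.trans (finCongr (two_mul m).symm))
        (finSumFinEquiv.trans (finCongr (two_mul m).symm)))
    (P : ℕ → ℝ → ℝ)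
    (hPpoly : ∀ j, ∃ p : Polynomial ℝ, ∀ x, P j x = p.eval x)
    (hPorth : ∀ i j, ∫ x in (0:ℝ)..1, P i x * P j x = if i = j then 1 else 0)
    (σ : ℝ → (Fin (2*m) → ℝ)) (y0 : Fin (2*m) → ℝ)
    (hσpoly : ∀ i : Fin (2*m), ∃ p : Polynomial ℝ, ∀ t, σ t i = p.eval t)
    (hσ0 : σ t0 = y0)
    (hode : ∀ τ ∈ Set.Icc (0:ℝ) 1,
      HasDerivAt σ
        (J.mulVec (∑ j ∈ Finset.range s,
          P j τ • ∫ c in (0:ℝ)..1, P j c • gH (σ (t0 + c*h))))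
        (t0 + τ * h)) :
    H (σ (t0 + h)) = H y0 := by
  classical
  -- skew symmetry of J
  have hJT : Jᵀ = -J := by
    subst hJ
    subst_eqs
    rw [Matrix.transpose_reindex, Matrix.fromBlocks_transpose]
    simp only [Matrix.transpose_zero, Matrix.transpose_one, Matrix.transpose_neg]
    rw [show Matrix.fromBlocks (0 : Matrix (Fin m) (Fin m) ℝ) (-1) 1 0
        = -(Matrix.fromBlocks 0 1 (-1) 0) by
      rw [Matrix.fromBlocks_neg]; simp]
    simp only [Matrix.reindex_apply]
    rfl
  -- continuity of P j
  have hPcont : ∀ j, Continuous (P j) := by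
    intro j
    obtain ⟨p, hp⟩ := hPpoly j
    have : P j = fun x => p.eval x := funext hp
    rw [this]; exact p.continuous_aeval
  -- continuity of σ
  have hσcont : Continuous σ := by
    refine continuous_pi ?_
    intro i
    obtain ⟨p, hp⟩ := hσpoly i
    have : (fun t => σ t i) = fun t => p.eval t := funext hp
    rw [this]; exact p.continuous_aeval
  -- continuity of gH
  have hHd : Differentiable ℝ H := hH1.differentiable one_ne_zero
  have hfd : ∀ y v, fderiv ℝ H y v = gH y ⬝ᵥ v := by
    intro y v
    have hline : HasDerivAt (fun r : ℝ => y + r • v) v 0 := by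
      simpa using ((hasDerivAt_id (0:ℝ)).smul_const v).const_add y
    have hcomp : HasDerivAt (fun r : ℝ => H (y + r • v)) (fderiv ℝ H y v) 0 := by
      have h2 := (hHd (y + (0:ℝ) • v)).hasFDerivAt.comp_hasDerivAt 0 hline
      simpa [Function.comp_def] using h2
    exact hcomp.unique (hg y v)
  have hgHcont : Continuous gH := by
    refine continuous_pi ?_
    intro i
    have : (fun y => gH y i) = fun y => fderiv ℝ H y (Pi.single i 1) := by
      funext y
      rw [hfd y (Pi.single i 1)]
      simp [dotProduct_single]
    rw [this]
    exact (hH1.continuous_fderiv one_ne_zero).clm_apply continuous_const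
  -- the vector field along σ
  set f : ℝ → (Fin (2*m) → ℝ) := fun c => gH (σ (t0 + c * h)) with hf
  have hfcont : Continuous f := by
    apply hgHcont.comp
    exact hσcont.comp (by continuity)
  set Ij : ℕ → (Fin (2*m) → ℝ) := fun j => ∫ c in (0:ℝ)..1, P j c • f c with hIj
  set F : ℝ → (Fin (2*m) → ℝ) := fun τ => ∑ j ∈ Finset.range s, P j τ • Ij j with hF
  have hFcont : Continuous F := by
    apply continuous_finset_sum
    intro j _
    exact (hPcont j).smul continuous_const
  -- φ is the derivative of τ ↦ H (σ (t0 + τ h))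
  set φ : ℝ → ℝ := fun τ => h * (f τ ⬝ᵥ J.mulVec (F τ)) with hφ
  have hφcont : Continuous φ := by
    apply continuous_const.mul
    exact hfcont.dotProduct (continuous_const.matrix_mulVec hFcont)
  set g : ℝ → ℝ := fun τ => H (σ (t0 + τ * h)) with hgdef
  have hgderiv : ∀ τ ∈ Set.uIcc (0:ℝ) 1, HasDerivAt g (φ τ) τ := by
    intro τ hτ
    rw [Set.uIcc_of_le (by norm_num : (0:ℝ) ≤ 1)] at hτ
    have hline : HasDerivAt (fun τ : ℝ => t0 + τ * h) h τ := by
      simpa using ((hasDerivAt_id τ).mul_const h).const_add t0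
    have hσ' := hode τ hτ
    have hcomp : HasDerivAt (fun τ : ℝ => σ (t0 + τ * h))
        (h • (J.mulVec (F τ))) τ := hσ'.scomp τ hline
    have := (hHd (σ (t0 + τ * h))).hasFDerivAt.comp_hasDerivAt τ hcomp
    have heq : (fderiv ℝ H (σ (t0 + τ * h))) (h • J.mulVec (F τ)) = φ τ := by
      rw [map_smul, hfd]
      simp [hφ, hf, smul_eq_mul]
    rw [heq] at this
    exact this
  -- FTC
  have hFTC : ∫ τ in (0:ℝ)..1, φ τ = g 1 - g 0 :=
    intervalIntegral.integral_eq_sub_of_hasDerivAt hgderiv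
      (hφcont.intervalIntegrable 0 1)
  -- the integral vanishes
  have hIapp : ∀ j (i : Fin (2*m)), Ij j i = ∫ c in (0:ℝ)..1, P j c * f c i := by
    intro j i
    have hint : IntervalIntegrable (fun c => P j c • f c) MeasureTheory.volume 0 1 :=
      ((hPcont j).smul hfcont).intervalIntegrable 0 1
    have := (ContinuousLinearMap.proj (R := ℝ) (φ := fun _ : Fin (2*m) => ℝ)
        i).intervalIntegral_comp_comm hint
    simpa [smul_eq_mul] using this.symm
  have hzero : ∫ τ in (0:ℝ)..1, φ τ = 0 := by
    have hsplit : ∀ τ, φ τ = ∑ j ∈ Finset.range s,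
        h * (P j τ * (f τ ⬝ᵥ J.mulVec (Ij j))) := by
      intro τ
      have hmv : J.mulVec (∑ j ∈ Finset.range s, P j τ • Ij j)
          = ∑ j ∈ Finset.range s, P j τ • J.mulVec (Ij j) := by
        have := map_sum (Matrix.mulVecLin J)
          (fun j => P j τ • Ij j) (Finset.range s)
        simp only [map_smul, Matrix.mulVecLin_apply] at this
        exact this
      rw [hφ]
      simp only [hF]
      rw [hmv, dot_sum, Finset.mul_sum]
      refine Finset.sum_congr rfl fun j _ => ?_
      rw [dotProduct_smul, smul_eq_mul]
    calc ∫ τ in (0:ℝ)..1, φ τ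
        = ∫ τ in (0:ℝ)..1, ∑ j ∈ Finset.range s,
            h * (P j τ * (f τ ⬝ᵥ J.mulVec (Ij j))) := by
          simp_rw [hsplit]
      _ = ∑ j ∈ Finset.range s, ∫ τ in (0:ℝ)..1,
            h * (P j τ * (f τ ⬝ᵥ J.mulVec (Ij j))) := by
          apply intervalIntegral.integral_finset_sum
          intro j _
          exact (continuous_const.mul ((hPcont j).mul
            (hfcont.dotProduct continuous_const))).intervalIntegrable 0 1
      _ = 0 := by
          refine Finset.sum_eq_zero fun j _ => ?_
          have key : ∫ τ in (0:ℝ)..1, P j τ * (f τ ⬝ᵥ J.mulVec (Ij j))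
              = Ij j ⬝ᵥ J.mulVec (Ij j) := by
            have : ∀ τ, P j τ * (f τ ⬝ᵥ J.mulVec (Ij j))
                = ∑ i, (P j τ * f τ i) * J.mulVec (Ij j) i := by
              intro τ
              rw [dotProduct, Finset.mul_sum]
              exact Finset.sum_congr rfl fun i _ => by ring
            simp_rw [this]
            rw [intervalIntegral.integral_finset_sum]
            · rw [dotProduct]
              refine Finset.sum_congr rfl fun i _ => ?_
              rw [intervalIntegral.integral_mul_const, hIapp]
            · intro i _
              exact (((hPcont j).mul ((continuous_apply i).comp hfcont)).mul
                continuous_const).intervalIntegrable 0 1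
          rw [intervalIntegral.integral_const_mul, key,
            skew_quad J hJT (Ij j), mul_zero]
  rw [hzero] at hFTC
  have h1 : g 1 = H (σ (t0 + h)) := by simp [hgdef]
  have h0 : g 0 = H y0 := by simp [hgdef, hσ0]
  rw [h1, h0] at hFTC
  linarith
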